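/- Define linear operators on V = ℂ ⊕ ℂ³ ⊕ ℂ with basis f (top scalar), e_1, e_2, e_3 (vector), g (bottom scalar) by: ρ(J^{ij}) e_k = δ^{ik} e_j − δ^{jk} e_i, ρ(J^{ij}) f = ρ(J^{ij}) g = 0, ρ(B^i) f = e_i, ρ(B^i) e_j = δ^{ij} g, ρ(B^i) g = 0. Then ρ is a representation of the Lie algebra iso(3) (in particular all ρ(B^i) commute pairwise), and it is indecomposable. -/

import Mathlib

open Matrix

/-- Embedding of the spatial index i ∈ {1,2,3} into the basis Fin 5 of the
    (0)→(1)→(0) module: index 0 is the top scalar f, 1..3 the vector eᵢ, 4 the bottom scalar g. -/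
def spIdx (i : Fin 3) : Fin 5 := i.succ.castSucc

/-- Rotations J^{ij} of the (0)→(1)→(0) chain representation on ℂ⁵. -/
noncomputable def chainJ (i j : Fin 3) : Module.End ℂ (Fin 5 → ℂ) :=
  Matrix.toLin' (Matrix.of fun m k : Fin 5 =>
    ((if m = spIdx j ∧ k = spIdx i then 1 else 0)
      - (if m = spIdx i ∧ k = spIdx j then 1 else 0) : ℂ))

/-- Boosts B^i of the (0)→(1)→(0) chain representation:
    B^i f = e_i, B^i e_j = δ^{ij} g, B^i g = 0. -/
noncomputable def chainB (i : Fin 3) : Module.End ℂ (Fin 5 → ℂ) :=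
  Matrix.toLin' (Matrix.of fun m k : Fin 5 =>
    ((if m = spIdx i ∧ k = 0 then 1 else 0) + (if m = 4 ∧ k = spIdx i then 1 else 0) : ℂ))

noncomputable abbrev Em (a b : Fin 5) : Matrix (Fin 5) (Fin 5) ℂ := Matrix.single a b 1

lemma Em_mul (a b c d : Fin 5) : Em a b * Em c d = if b = c then Em a d else 0 := by
  split_ifs with h
  · subst h; simpa using Matrix.single_mul_single_same (c := 1) a b d 1
  · exact Matrix.single_mul_single_of_ne (c := 1) a b _ h 1

lemma spIdx_inj {a b : Fin 3} : spIdx a = spIdx b ↔ a = b := by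
  constructor
  · intro h; exact Fin.succ_injective _ (Fin.castSucc_injective _ h)
  · rintro rfl; rfl

lemma spIdx_ne_zero (a : Fin 3) : spIdx a ≠ 0 := by fin_cases a <;> decide
lemma spIdx_ne_four (a : Fin 3) : spIdx a ≠ 4 := by fin_cases a <;> decide

lemma stdBasisMatrix_apply (a b m k : Fin 5) :
    Em a b m k = if a = m ∧ b = k then 1 else 0 := rfl

lemma chainJ_eq (i j : Fin 3) :
    chainJ i j = Matrix.toLin' (Em (spIdx j) (spIdx i) - Em (spIdx i) (spIdx j)) := by
  unfold chainJ
  congr 1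
  ext m k
  simp [stdBasisMatrix_apply, Matrix.sub_apply, eq_comm, and_comm]

lemma chainB_eq (i : Fin 3) :
    chainB i = Matrix.toLin' (Em (spIdx i) 0 + Em 4 (spIdx i)) := by
  unfold chainB
  congr 1
  ext m k
  simp [stdBasisMatrix_apply, Matrix.add_apply, eq_comm, and_comm]

lemma ite_toLin (c : Prop) [Decidable c] (M : Matrix (Fin 5) (Fin 5) ℂ) :
    (if c then Matrix.toLin' M else (0 : Module.End ℂ (Fin 5 → ℂ)))
      = Matrix.toLin' (if c then M else 0) := by
  split <;> simp

lemma bracket_toLin' (A B : Matrix (Fin 5) (Fin 5) ℂ) :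
    ⁅Matrix.toLin' A, Matrix.toLin' B⁆ = Matrix.toLin' (A * B - B * A) := by
  simp only [Ring.lie_def, map_sub, Matrix.toLin'_mul, Module.End.mul_eq_comp]

lemma Es_mul (a b c d : Fin 3) :
    Em (spIdx a) (spIdx b) * Em (spIdx c) (spIdx d)
      = if b = c then Em (spIdx a) (spIdx d) else 0 := by
  rw [Em_mul]; simp [spIdx_inj]

/-- The (0)→(1)→(0) chain is a representation of iso(3) (with commuting boosts),
    and it is indecomposable. -/
theorem chain010_rep_indecomposable :
    (∀ i j k l, ⁅chainJ i j, chainJ k l⁆ =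
      (if i = k then chainJ j l else 0) - (if i = l then chainJ j k else 0)
        + (if j = l then chainJ i k else 0) - (if j = k then chainJ i l else 0)) ∧
    (∀ i j k, ⁅chainJ i j, chainB k⁆ =
      (if i = k then chainB j else 0) - (if j = k then chainB i else 0)) ∧
    (∀ i j, ⁅chainB i, chainB j⁆ = 0) ∧
    (¬ ∃ W₁ W₂ : Submodule ℂ (Fin 5 → ℂ),
      (∀ i j, ∀ v ∈ W₁, chainJ i j v ∈ W₁) ∧ (∀ i, ∀ v ∈ W₁, chainB i v ∈ W₁) ∧
      (∀ i j, ∀ v ∈ W₂, chainJ i j v ∈ W₂) ∧ (∀ i, ∀ v ∈ W₂, chainB i v ∈ W₂) ∧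
      W₁ ≠ ⊥ ∧ W₂ ≠ ⊥ ∧ W₁ ⊓ W₂ = ⊥ ∧ W₁ ⊔ W₂ = ⊤) := by
  refine ⟨?_, ?_, ?_, ?_⟩
  · intro i j k l
    simp only [chainJ_eq, bracket_toLin', ite_toLin, ← map_sub, ← map_add]
    congr 1
    simp only [sub_mul, mul_sub, Es_mul]
    split_ifs <;> subst_vars <;> simp_all <;> abel
  · intro i j k
    simp only [chainJ_eq, chainB_eq, bracket_toLin', ite_toLin, ← map_sub]
    congr 1
    simp only [sub_mul, mul_sub, mul_add, add_mul, Em_mul]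
    simp only [spIdx_inj, (spIdx_ne_four _), (spIdx_ne_zero _).symm,
      if_false, show ((0:Fin 5) ≠ 4) from by decide, (spIdx_ne_four _).symm]
    split_ifs <;> subst_vars <;> simp_all <;> abel
  · intro i j
    simp only [chainB_eq, bracket_toLin']
    rw [show ((0:Module.End ℂ (Fin 5 → ℂ))) = Matrix.toLin' 0 from by simp]
    congr 1
    simp only [mul_add, add_mul, Em_mul]
    simp only [spIdx_inj, (spIdx_ne_zero _).symm, (spIdx_ne_four _),
      show ((0:Fin 5) ≠ 4) from by decide, if_false]
    split_ifs <;> subst_vars <;> simp_all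
  · rintro ⟨W₁, W₂, _, hB₁, _, hB₂, hne₁, hne₂, hinf, -⟩
    -- chainB action formula
    have hBact : ∀ (i : Fin 3) (v : Fin 5 → ℂ),
        chainB i v = Pi.single (spIdx i) (v 0) + Pi.single 4 (v (spIdx i)) := by
      intro i v
      rw [chainB_eq]
      funext m
      simp [Matrix.toLin'_apply, Matrix.mulVec, dotProduct, stdBasisMatrix_apply,
        Pi.single_apply, ite_and, Finset.sum_ite_eq, Finset.sum_ite_eq',
        Finset.sum_add_distrib, eq_comm]
    have key : ∀ W : Submodule ℂ (Fin 5 → ℂ), (∀ i, ∀ v ∈ W, chainB i v ∈ W) → W ≠ ⊥ →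
        (Pi.single (4:Fin 5) (1:ℂ)) ∈ W := by
      intro W hB hne
      obtain ⟨v, hv, hv0⟩ := Submodule.exists_mem_ne_zero_of_ne_bot hne
      have hsingle : ∀ c : ℂ, c ≠ 0 → Pi.single (4:Fin 5) c ∈ W → Pi.single (4:Fin 5) (1:ℂ) ∈ W := by
        intro c hc hm
        have := W.smul_mem c⁻¹ hm
        rwa [show c⁻¹ • (Pi.single (4:Fin 5) c : Fin 5 → ℂ) = Pi.single (4:Fin 5) (1:ℂ) from by
          funext m; simp [Pi.single_apply]; split <;> simp [inv_mul_cancel₀ hc]] at this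
      by_cases h0 : v 0 ≠ 0
      · have h1 := hB 0 v hv
        have h2 := hB 0 _ h1
        rw [hBact, hBact] at h2
        have e1 : ((Pi.single (spIdx 0) (v 0) + Pi.single 4 (v (spIdx 0)) : Fin 5 → ℂ)) 0 = 0 := by
          simp [Pi.single_apply, Ne.symm (spIdx_ne_zero 0)]
        have e2 : ((Pi.single (spIdx 0) (v 0) + Pi.single 4 (v (spIdx 0)) : Fin 5 → ℂ)) (spIdx 0)
            = v 0 := by
          simp [Pi.single_apply, spIdx_ne_four 0]
        rw [e1, e2] at h2
        have : Pi.single (4:Fin 5) (v 0) ∈ W := by simpa using h2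
        exact hsingle _ h0 this
      · push_neg at h0
        by_cases h1 : ∃ i, v (spIdx i) ≠ 0
        · obtain ⟨i, hi⟩ := h1
          have h2 := hB i v hv
          rw [hBact, h0] at h2
          have : Pi.single (4:Fin 5) (v (spIdx i)) ∈ W := by simpa using h2
          exact hsingle _ hi this
        · push_neg at h1
          have hv1 : v 1 = 0 := h1 0
          have hv2 : v 2 = 0 := h1 1
          have hv3 : v 3 = 0 := h1 2
          have h4 : v 4 ≠ 0 := by
            intro h
            apply hv0
            funext m
            fin_cases m
            · exact h0
            · exact hv1
            · exact hv2
            · exact hv3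
            · exact h
          have hveq : v = Pi.single (4:Fin 5) (v 4) := by
            funext m
            fin_cases m <;> simp [Pi.single_apply, h0, hv1, hv2, hv3]
          exact hsingle _ h4 (hveq ▸ hv)
    have hg₁ := key W₁ hB₁ hne₁
    have hg₂ := key W₂ hB₂ hne₂
    have : Pi.single (4:Fin 5) (1:ℂ) ∈ W₁ ⊓ W₂ := ⟨hg₁, hg₂⟩
    rw [hinf] at this
    simp only [Submodule.mem_bot] at this
    have := congrFun this 4
    simp at this
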